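/- The function F_{2M}(x) := 2 ∑_{p=1}^{M} ([(2p-3)!!]^2/(2p-1)!) sin^{2p-1}(x/2) satisfies the Taylor expansion F_{2M}(x) = x − ([(2M-1)!!]^2 / (2^{2M}(2M+1)!)) x^{2M+1} + O(x^{2M+3}) as x → 0, for every integer M ≥ 1. -/

import Mathlib

open Nat Finset Real Filter Asymptotics

/-- The symbol `F_{2M}` of the `2M`-th order staggered finite difference
approximation of the first derivative. -/
noncomputable def FsymFD (M : ℕ) (x : ℝ) : ℝ :=
  2 * ∑ p ∈ Finset.Icc 1 M,
    ((2 * p - 3)‼ : ℝ) ^ 2 / ((2 * p - 1)! : ℝ) * Real.sin (x / 2) ^ (2 * p - 1)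

noncomputable def bb (k : ℕ) : ℝ := ((2 * k - 1)‼ : ℝ) / ((2 * k)‼ : ℝ)

noncomputable def AA (k : ℕ) : ℝ := ((2 * k - 1)‼ : ℝ) ^ 2 / ((2 * k + 1)! : ℝ)

lemma bb_zero : bb 0 = 1 := by norm_num [bb, Nat.doubleFactorial]

lemma bb_pos (k : ℕ) : 0 < bb k :=
  div_pos (by exact_mod_cast Nat.doubleFactorial_pos _) (by exact_mod_cast Nat.doubleFactorial_pos _)

lemma bb_succ (k : ℕ) : bb (k + 1) = bb k * (2 * k + 1) / (2 * k + 2) := by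
  cases k with
  | zero => norm_num [bb, Nat.doubleFactorial]
  | succ k =>
      have h1 : 2 * (k + 1 + 1) - 1 = 2 * (k + 1) - 1 + 2 := by omega
      have h2 : 2 * (k + 1 + 1) = 2 * (k + 1) + 2 := by omega
      have h3 : 2 * (k + 1) - 1 + 2 = 2 * (k + 1) + 1 := by omega
      rw [bb, bb, h1, h2, Nat.doubleFactorial_add_two, Nat.doubleFactorial_add_two, h3]
      have d1 : ((2 * (k + 1))‼ : ℝ) ≠ 0 := by exact_mod_cast (Nat.doubleFactorial_pos _).ne'
      push_cast
      field_simp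

lemma AA_mul (k : ℕ) : (2 * (k : ℝ) + 1) * AA k = bb k := by
  have hfac : ((2 * k + 1)! : ℕ) = (2 * k + 1)‼ * (2 * k)‼ := Nat.factorial_eq_mul_doubleFactorial _
  have hdf : ((2 * k + 1)‼ : ℕ) = (2 * k + 1) * (2 * k - 1)‼ := Nat.doubleFactorial_add_one _
  have d1 : ((2 * k - 1)‼ : ℝ) ≠ 0 := by exact_mod_cast (Nat.doubleFactorial_pos _).ne'
  have d2 : ((2 * k)‼ : ℝ) ≠ 0 := by exact_mod_cast (Nat.doubleFactorial_pos _).ne'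
  rw [AA, bb, hfac, hdf]
  push_cast
  field_simp

lemma abs_le_of_mem_uIcc {t x : ℝ} (ht : t ∈ Set.uIcc (0 : ℝ) x) : |t| ≤ |x| := by
  rcases Set.mem_uIcc.1 ht with ⟨h1, h2⟩ | ⟨h1, h2⟩
  · rw [abs_of_nonneg h1, abs_of_nonneg (h1.trans h2)]; exact h2
  · rw [abs_of_nonpos h2, abs_of_nonpos (h1.trans h2)]; linarith

/-- MVT-based integration lemma for big-O. -/
lemma isBigO_succ_of_hasDerivAt {f g : ℝ → ℝ} {n : ℕ} (hf0 : f 0 = 0)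
    (hd : ∀ᶠ u in nhds (0 : ℝ), HasDerivAt f (g u) u)
    (hg : g =O[nhds (0 : ℝ)] fun u => u ^ n) :
    f =O[nhds (0 : ℝ)] fun u => u ^ (n + 1) := by
  obtain ⟨C, hC, hbd⟩ := hg.exists_pos
  have hbd' := hbd.bound
  rw [Metric.eventually_nhds_iff] at hbd' hd
  obtain ⟨ε₁, hε₁, h₁⟩ := hbd'
  obtain ⟨ε₂, hε₂, h₂⟩ := hd
  set δ := min ε₁ ε₂ with hδ
  have hδpos : 0 < δ := lt_min hε₁ hε₂
  rw [isBigO_iff]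
  refine ⟨C, ?_⟩
  rw [Metric.eventually_nhds_iff]
  refine ⟨δ, hδpos, fun x hx => ?_⟩
  have hxabs : |x| < δ := by simpa [Real.dist_eq] using hx
  have hmem : ∀ t ∈ Set.uIcc (0 : ℝ) x, dist t 0 < δ := fun t ht => by
    rw [Real.dist_eq, sub_zero]; exact lt_of_le_of_lt (abs_le_of_mem_uIcc ht) hxabs
  have hconv : Convex ℝ (Set.uIcc (0 : ℝ) x) := by
    rw [Set.uIcc]; exact convex_Icc _ _
  have hder : ∀ t ∈ Set.uIcc (0 : ℝ) x, HasDerivWithinAt f (g t) (Set.uIcc (0 : ℝ) x) t :=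
    fun t ht => (h₂ ((hmem t ht).trans_le (min_le_right _ _))).hasDerivWithinAt
  have hbound : ∀ t ∈ Set.uIcc (0 : ℝ) x, ‖g t‖ ≤ C * |x| ^ n := by
    intro t ht
    calc ‖g t‖ ≤ C * ‖t ^ n‖ := h₁ ((hmem t ht).trans_le (min_le_left _ _))
      _ = C * |t| ^ n := by rw [norm_pow]; rfl
      _ ≤ C * |x| ^ n := mul_le_mul_of_nonneg_left (pow_le_pow_left₀ (abs_nonneg t) (abs_le_of_mem_uIcc ht) n) hC.le
  have key := hconv.norm_image_sub_le_of_norm_hasDerivWithin_le hder hbound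
    Set.left_mem_uIcc Set.right_mem_uIcc
  rw [hf0, sub_zero, sub_zero] at key
  calc ‖f x‖ ≤ C * |x| ^ n * ‖x‖ := key
    _ = C * ‖x ^ (n + 1)‖ := by
        rw [norm_pow, Real.norm_eq_abs, pow_succ]; ring

noncomputable def hh (N : ℕ) (u : ℝ) : ℝ :=
  (Real.sqrt (1 - u))⁻¹ - ∑ k ∈ Finset.range (N + 1), bb k * u ^ k

lemma hh_zero (N : ℕ) : hh N 0 = 0 := by
  rw [hh, Finset.sum_eq_single 0]
  · simp [bb_zero]
  · intro k _ hk
    rw [zero_pow hk, mul_zero]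
  · simp

lemma hasDerivAt_invsqrt {u : ℝ} (hu : u < 1) :
    HasDerivAt (fun u : ℝ => (Real.sqrt (1 - u))⁻¹)
      ((Real.sqrt (1 - u))⁻¹ / (2 * (1 - u))) u := by
  have h1u : (0 : ℝ) < 1 - u := by linarith
  have hs : Real.sqrt (1 - u) ≠ 0 := (Real.sqrt_pos.2 h1u).ne'
  have h1 : HasDerivAt (fun u : ℝ => 1 - u) (-1) u := by
    simpa using (hasDerivAt_id u).const_sub 1
  have h2 : HasDerivAt (fun u : ℝ => Real.sqrt (1 - u)) (1 / (2 * Real.sqrt (1 - u)) * (-1)) u :=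
    (Real.hasDerivAt_sqrt h1u.ne').comp u h1
  have h3 := h2.inv hs
  refine h3.congr_deriv ?_
  symm
  rw [Real.sq_sqrt h1u.le]
  field_simp

lemma poly_id (N : ℕ) (u : ℝ) :
    (1 - u) * ∑ k ∈ Finset.range (N + 1), bb k * (k * u ^ (k - 1)) =
      (∑ k ∈ Finset.range (N + 1), bb k * u ^ k) / 2 - ((N : ℝ) + 1 / 2) * bb N * u ^ N := by
  induction N with
  | zero => simp [bb_zero]
  | succ N ih =>
      rw [Finset.sum_range_succ, Finset.sum_range_succ (f := fun k => bb k * u ^ k), mul_add, ih,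
        bb_succ]
      push_cast
      field_simp
      ring

lemma hasDerivAt_hh (N : ℕ) {u : ℝ} (hu : u < 1) :
    HasDerivAt (hh N)
      ((hh N u / 2 + ((N : ℝ) + 1 / 2) * bb N * u ^ N) / (1 - u)) u := by
  have h1u : (0 : ℝ) < 1 - u := by linarith
  have h1u' : (1 : ℝ) - u ≠ 0 := h1u.ne'
  have hP : HasDerivAt (fun u : ℝ => ∑ k ∈ Finset.range (N + 1), bb k * u ^ k)
      (∑ k ∈ Finset.range (N + 1), bb k * (k * u ^ (k - 1))) u := by
    refine HasDerivAt.fun_sum fun k _ => ?_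
    exact (hasDerivAt_pow k u).const_mul (bb k)
  have hD := (hasDerivAt_invsqrt hu).sub hP
  refine hD.congr_deriv ?_
  symm
  have hS : ∑ k ∈ Finset.range (N + 1), bb k * (k * u ^ (k - 1)) =
      ((∑ k ∈ Finset.range (N + 1), bb k * u ^ k) / 2 - ((N : ℝ) + 1 / 2) * bb N * u ^ N)
        / (1 - u) := by
    rw [eq_div_iff h1u', mul_comm]
    exact poly_id N u
  rw [hS, hh]
  set A := (Real.sqrt (1 - u))⁻¹ with hA
  field_simp
  ring

lemma hh_deriv_O {N : ℕ} (h : hh N =O[nhds (0 : ℝ)] fun u => u ^ N) :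
    (fun u => (hh N u / 2 + ((N : ℝ) + 1 / 2) * bb N * u ^ N) / (1 - u))
      =O[nhds (0 : ℝ)] fun u => u ^ N := by
  have hinv : Filter.Tendsto (fun u : ℝ => (1 - u)⁻¹) (nhds 0) (nhds 1) := by
    have h0 : Filter.Tendsto (fun u : ℝ => 1 - u) (nhds 0) (nhds 1) := by
      exact (continuous_const.sub continuous_id).tendsto' (0 : ℝ) 1 (by simp)
    simpa using h0.inv₀ (by norm_num)
  have hinvO : (fun u : ℝ => (1 - u)⁻¹) =O[nhds (0 : ℝ)] (fun _ => (1 : ℝ)) :=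
    hinv.isBigO_one ℝ
  have h1 : (fun u : ℝ => hh N u / 2 + ((N : ℝ) + 1 / 2) * bb N * u ^ N)
      =O[nhds (0 : ℝ)] fun u => u ^ N := by
    refine IsBigO.add ?_ ((isBigO_refl _ _).const_mul_left _)
    have heq : (fun u : ℝ => hh N u / 2) = fun u => (1 / 2) * hh N u := by
      funext u; ring
    rw [heq]
    exact h.const_mul_left _
  have h2 : (fun u : ℝ => (hh N u / 2 + ((N : ℝ) + 1 / 2) * bb N * u ^ N) / (1 - u))
      = fun u => (hh N u / 2 + ((N : ℝ) + 1 / 2) * bb N * u ^ N) * (1 - u)⁻¹ := by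
    funext u; rw [div_eq_mul_inv]
  rw [h2]
  simpa using h1.mul hinvO

lemma hh_isBigO : ∀ N : ℕ, (hh N) =O[nhds (0 : ℝ)] fun u => u ^ (N + 1) := by
  have hev : ∀ᶠ u in nhds (0 : ℝ), u < 1 := eventually_lt_nhds (by norm_num)
  intro N
  induction N with
  | zero =>
      have haux : hh 0 =O[nhds (0 : ℝ)] (fun u => u ^ 0) := by
        simp only [pow_zero]
        exact ((hasDerivAt_hh 0 (by norm_num : (0:ℝ) < 1)).continuousAt).tendsto.isBigO_one ℝ
      exact isBigO_succ_of_hasDerivAt (hh_zero 0)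
        (hev.mono fun u hu => hasDerivAt_hh 0 hu) (hh_deriv_O haux)
  | succ N ih =>
      have haux : hh (N + 1) =O[nhds (0 : ℝ)] fun u => u ^ (N + 1) := by
        have heq : hh (N + 1) = fun u => hh N u - bb (N + 1) * u ^ (N + 1) := by
          funext u; rw [hh, hh, Finset.sum_range_succ]; ring
        rw [heq]
        exact ih.sub ((isBigO_refl _ _).const_mul_left _)
      exact isBigO_succ_of_hasDerivAt (hh_zero (N + 1))
        (hev.mono fun u hu => hasDerivAt_hh (N + 1) hu) (hh_deriv_O haux)
noncomputable def TT (N : ℕ) (s : ℝ) : ℝ :=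
  2 * Real.arcsin s - ∑ k ∈ Finset.range (N + 1), 2 * AA k * s ^ (2 * k + 1)

lemma TT_zero (N : ℕ) : TT N 0 = 0 := by
  rw [TT, Finset.sum_eq_zero]
  · simp
  · intro k _
    rw [zero_pow (by omega), mul_zero]

lemma hasDerivAt_TT (N : ℕ) {s : ℝ} (hs : |s| < 1) :
    HasDerivAt (TT N) (2 * hh N (s ^ 2)) s := by
  have h1 : s ≠ -1 := by intro h; rw [h] at hs; norm_num at hs
  have h2 : s ≠ 1 := by intro h; rw [h] at hs; norm_num at hs
  have ha := (Real.hasDerivAt_arcsin h1 h2).const_mul 2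
  have hP : HasDerivAt (fun s : ℝ => ∑ k ∈ Finset.range (N + 1), 2 * AA k * s ^ (2 * k + 1))
      (∑ k ∈ Finset.range (N + 1), 2 * AA k * ((2 * k + 1) * s ^ (2 * k))) s := by
    refine HasDerivAt.fun_sum fun k _ => ?_
    have := (hasDerivAt_pow (2 * k + 1) s).const_mul (2 * AA k)
    simpa using this
  have hD := ha.sub hP
  refine hD.congr_deriv ?_
  symm
  rw [hh, mul_sub, one_div]
  congr 1
  rw [Finset.mul_sum]
  refine Finset.sum_congr rfl fun k _ => ?_
  rw [pow_mul, ← AA_mul k]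
  ring

lemma TT_isBigO (N : ℕ) : (TT N) =O[nhds (0 : ℝ)] fun s => s ^ (2 * N + 3) := by
  have hev : ∀ᶠ s in nhds (0 : ℝ), |s| < 1 := by
    have : Filter.Tendsto (fun s : ℝ => |s|) (nhds 0) (nhds 0) := by
      simpa using continuous_abs.tendsto (0 : ℝ)
    exact this.eventually_lt_const (by norm_num)
  have hsq : Filter.Tendsto (fun s : ℝ => s ^ 2) (nhds 0) (nhds 0) := by
    simpa using (continuous_pow 2).tendsto (0 : ℝ)
  have hcomp : (fun s : ℝ => hh N (s ^ 2)) =O[nhds (0 : ℝ)] fun s => (s ^ 2) ^ (N + 1) :=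
    (hh_isBigO N).comp_tendsto hsq
  have hder : (fun s : ℝ => 2 * hh N (s ^ 2)) =O[nhds (0 : ℝ)] fun s => s ^ (2 * N + 2) := by
    have : (fun s : ℝ => (s ^ 2) ^ (N + 1)) = fun s => s ^ (2 * N + 2) := by
      funext s; rw [← pow_mul]; ring_nf
    exact (this ▸ hcomp).const_mul_left 2
  have := isBigO_succ_of_hasDerivAt (TT_zero N)
    (hev.mono fun s hs => hasDerivAt_TT N hs) hder
  simpa using this

lemma my_abs_sin_le_aux {x : ℝ} (hx : 0 ≤ x) : |Real.sin x| ≤ |x| := by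
  rw [abs_of_nonneg hx, abs_le]
  refine ⟨?_, Real.sin_le hx⟩
  rcases le_or_gt x 1 with h1 | h1
  · have : 0 ≤ Real.sin x := Real.sin_nonneg_of_nonneg_of_le_pi hx
      (h1.trans (by linarith [Real.pi_gt_three]))
    linarith
  · linarith [Real.neg_one_le_sin x]

lemma my_abs_sin_le (x : ℝ) : |Real.sin x| ≤ |x| := by
  rcases le_or_gt 0 x with hx | hx
  · exact my_abs_sin_le_aux hx
  · have := my_abs_sin_le_aux (neg_nonneg.2 hx.le)
    rwa [Real.sin_neg, abs_neg, abs_neg] at this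

lemma sin_isBigO : (fun x : ℝ => Real.sin x) =O[nhds (0 : ℝ)] fun x => x ^ 1 := by
  rw [isBigO_iff]
  exact ⟨1, Filter.Eventually.of_forall fun x => by
    simpa [Real.norm_eq_abs] using my_abs_sin_le x⟩

lemma one_sub_cos_isBigO : (fun x : ℝ => 1 - Real.cos x) =O[nhds (0 : ℝ)] fun x => x ^ 2 := by
  have hd : ∀ᶠ x in nhds (0 : ℝ), HasDerivAt (fun x : ℝ => 1 - Real.cos x) (Real.sin x) x :=
    Filter.Eventually.of_forall fun x => by simpa using (Real.hasDerivAt_cos x).const_sub 1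
  exact isBigO_succ_of_hasDerivAt (by simp) hd sin_isBigO

lemma id_sub_sin_isBigO : (fun x : ℝ => x - Real.sin x) =O[nhds (0 : ℝ)] fun x => x ^ 3 := by
  have hd : ∀ᶠ x in nhds (0 : ℝ), HasDerivAt (fun x : ℝ => x - Real.sin x) (1 - Real.cos x) x :=
    Filter.Eventually.of_forall fun x => (hasDerivAt_id x).sub (Real.hasDerivAt_sin x)
  exact isBigO_succ_of_hasDerivAt (by simp) hd one_sub_cos_isBigO

lemma pow_sub_sin_pow_isBigO (k : ℕ) :
    (fun x : ℝ => x ^ k - Real.sin x ^ k) =O[nhds (0 : ℝ)] fun x => x ^ (k + 2) := by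
  rcases Nat.eq_zero_or_pos k with rfl | hk
  · simpa using (isBigO_zero (fun x : ℝ => x ^ 2) (nhds 0))
  have heq : (fun x : ℝ => x ^ k - Real.sin x ^ k) =
      fun x => (∑ i ∈ Finset.range k, x ^ i * Real.sin x ^ (k - 1 - i)) * (x - Real.sin x) := by
    funext x; rw [geom_sum₂_mul]
  rw [heq]
  have hgeom : (fun x : ℝ => ∑ i ∈ Finset.range k, x ^ i * Real.sin x ^ (k - 1 - i))
      =O[nhds (0 : ℝ)] fun x => x ^ (k - 1) := by
    rw [isBigO_iff]
    refine ⟨k, Filter.Eventually.of_forall fun x => ?_⟩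
    calc ‖∑ i ∈ Finset.range k, x ^ i * Real.sin x ^ (k - 1 - i)‖
        ≤ ∑ i ∈ Finset.range k, ‖x ^ i * Real.sin x ^ (k - 1 - i)‖ := norm_sum_le _ _
      _ ≤ ∑ _i ∈ Finset.range k, |x| ^ (k - 1) := by
          refine Finset.sum_le_sum fun i hi => ?_
          rw [norm_mul, norm_pow, norm_pow, Real.norm_eq_abs, Real.norm_eq_abs]
          calc |x| ^ i * |Real.sin x| ^ (k - 1 - i)
              ≤ |x| ^ i * |x| ^ (k - 1 - i) :=
                mul_le_mul_of_nonneg_left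
                  (pow_le_pow_left₀ (abs_nonneg _) (my_abs_sin_le x) _)
                  (pow_nonneg (abs_nonneg x) i)
            _ = |x| ^ (k - 1) := by
                rw [← pow_add]
                congr 1
                have := Finset.mem_range.1 hi
                omega
      _ = k * ‖x ^ (k - 1)‖ := by
          rw [Finset.sum_const, Finset.card_range, norm_pow, Real.norm_eq_abs, nsmul_eq_mul]
  have := hgeom.mul id_sub_sin_isBigO
  have hpow : (fun x : ℝ => x ^ (k - 1) * x ^ 3) = fun x : ℝ => x ^ (k + 2) := by
    funext x; rw [← pow_add]; congr 1; omega
  rwa [hpow] at this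

lemma FsymFD_eq (M : ℕ) (x : ℝ) :
    FsymFD M x = ∑ k ∈ Finset.range M, 2 * AA k * Real.sin (x / 2) ^ (2 * k + 1) := by
  rw [FsymFD, Finset.mul_sum, ← Finset.Ico_add_one_right_eq_Icc, Finset.sum_Ico_eq_sum_range]
  refine Finset.sum_congr rfl fun k _ => ?_
  have e1 : 2 * (1 + k) - 3 = 2 * k - 1 := by omega
  have e2 : 2 * (1 + k) - 1 = 2 * k + 1 := by omega
  rw [e1, e2, AA]
  ring

lemma half_pow_isBigO (n : ℕ) :
    (fun x : ℝ => (x / 2) ^ n) =O[nhds (0 : ℝ)] fun x => x ^ n := by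
  rw [isBigO_iff]
  refine ⟨1, Filter.Eventually.of_forall fun x => ?_⟩
  rw [norm_pow, norm_pow, Real.norm_eq_abs, Real.norm_eq_abs, one_mul]
  refine pow_le_pow_left₀ (abs_nonneg _) ?_ n
  rw [abs_div]
  rw [abs_of_pos (by norm_num : (0:ℝ) < 2)]
  linarith [abs_nonneg x]

lemma sin_half_pow_isBigO (n : ℕ) :
    (fun x : ℝ => Real.sin (x / 2) ^ n) =O[nhds (0 : ℝ)] fun x => x ^ n := by
  rw [isBigO_iff]
  refine ⟨1, Filter.Eventually.of_forall fun x => ?_⟩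
  rw [norm_pow, norm_pow, Real.norm_eq_abs, Real.norm_eq_abs, one_mul]
  refine pow_le_pow_left₀ (abs_nonneg _) ((my_abs_sin_le _).trans ?_) n
  rw [abs_div, abs_of_pos (by norm_num : (0:ℝ) < 2)]
  linarith [abs_nonneg x]

/-- Taylor expansion of the symbol:
`F_{2M}(x) = x − ([(2M-1)!!]²/(2^{2M}(2M+1)!)) x^{2M+1} + O(x^{2M+3})` as `x → 0`. -/
theorem FsymFD_taylor (M : ℕ) (hM : 1 ≤ M) :
    (fun x : ℝ => FsymFD M x -
        (x - ((2 * M - 1)‼ : ℝ) ^ 2 / (2 ^ (2 * M) * ((2 * M + 1)! : ℝ)) *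
          x ^ (2 * M + 1)))
      =O[nhds 0] fun x : ℝ => x ^ (2 * M + 3) := by
  have hc : ∀ x : ℝ, ((2 * M - 1)‼ : ℝ) ^ 2 / (2 ^ (2 * M) * ((2 * M + 1)! : ℝ)) *
      x ^ (2 * M + 1) = 2 * AA M * (x / 2) ^ (2 * M + 1) := by
    intro x
    rw [AA, div_pow]
    have hfac : ((2 * M + 1)! : ℝ) ≠ 0 := by exact_mod_cast (Nat.factorial_pos _).ne'
    field_simp
    ring
  -- the eventual identity
  have hid : ∀ x : ℝ, |x| < 1 →
      FsymFD M x - (x - ((2 * M - 1)‼ : ℝ) ^ 2 / (2 ^ (2 * M) * ((2 * M + 1)! : ℝ)) *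
        x ^ (2 * M + 1)) =
      -TT M (Real.sin (x / 2)) +
        2 * AA M * ((x / 2) ^ (2 * M + 1) - Real.sin (x / 2) ^ (2 * M + 1)) := by
    intro x hx
    obtain ⟨hx1, hx2⟩ := abs_lt.1 hx
    have hpi := Real.pi_gt_three
    have harc : Real.arcsin (Real.sin (x / 2)) = x / 2 :=
      Real.arcsin_sin (by linarith) (by linarith)
    rw [FsymFD_eq, TT, harc, Finset.sum_range_succ]
    linear_combination hc x
  have hEq : (fun x : ℝ => FsymFD M x -
      (x - ((2 * M - 1)‼ : ℝ) ^ 2 / (2 ^ (2 * M) * ((2 * M + 1)! : ℝ)) * x ^ (2 * M + 1)))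
      =ᶠ[nhds (0 : ℝ)] fun x =>
        -TT M (Real.sin (x / 2)) +
          2 * AA M * ((x / 2) ^ (2 * M + 1) - Real.sin (x / 2) ^ (2 * M + 1)) := by
    have hev : ∀ᶠ x in nhds (0 : ℝ), |x| < 1 := by
      have : Filter.Tendsto (fun x : ℝ => |x|) (nhds 0) (nhds 0) := by
        simpa using continuous_abs.tendsto (0 : ℝ)
      exact this.eventually_lt_const (by norm_num)
    filter_upwards [hev] with x hx using hid x hx
  have htend : Filter.Tendsto (fun x : ℝ => Real.sin (x / 2)) (nhds 0) (nhds 0) :=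
    (Real.continuous_sin.comp (continuous_id.div_const 2)).tendsto' 0 0 (by simp)
  have htend2 : Filter.Tendsto (fun x : ℝ => x / 2) (nhds (0 : ℝ)) (nhds 0) :=
    (continuous_id.div_const 2).tendsto' 0 0 (by simp)
  have hA : (fun x : ℝ => -TT M (Real.sin (x / 2))) =O[nhds (0 : ℝ)]
      fun x => x ^ (2 * M + 3) := by
    have h1 := (TT_isBigO M).comp_tendsto htend
    simp only [Function.comp_def] at h1
    exact (h1.trans (sin_half_pow_isBigO (2 * M + 3))).neg_left
  have hB : (fun x : ℝ => 2 * AA M *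
      ((x / 2) ^ (2 * M + 1) - Real.sin (x / 2) ^ (2 * M + 1))) =O[nhds (0 : ℝ)]
      fun x => x ^ (2 * M + 3) := by
    have h1 := (pow_sub_sin_pow_isBigO (2 * M + 1)).comp_tendsto htend2
    simp only [Function.comp_def] at h1
    have h2 : (fun x : ℝ => (x / 2) ^ (2 * M + 1) - Real.sin (x / 2) ^ (2 * M + 1))
        =O[nhds (0 : ℝ)] fun x => x ^ (2 * M + 3) := by
      have h3 := h1.trans (half_pow_isBigO (2 * M + 1 + 2))
      have : 2 * M + 1 + 2 = 2 * M + 3 := by omega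
      rwa [this] at h3
    exact h2.const_mul_left _
  exact (hA.add hB).congr' hEq.symm Filter.EventuallyEq.rfl
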